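/- Let 1 ≤ k_1 < k_2 < ... < k_s and n be positive integers, p a prime, q = p^r, and F_q = {0, α_1, ..., α_{q−1}} the Galois field of q elements. Let β_1, ..., β_s ∈ F_q^× and consider the symmetric polynomial F = Σ_{j=1}^{s} β_j e_{n,k_j}. Then S_{F_q}(F) = Σ_{m_1=0}^{n} Σ_{m_2=0}^{n−m_1} ... Σ_{m_{q−1}=0}^{n−m_1−...−m_{q−2}} multinomial(n; m_0*, m_1, ..., m_{q−1}) · exp((2πi/p) · Tr_{F_q/F_p}(Σ_{j=1}^{s} β_j Λ_{α_1,...,α_{q−1}}(k_j, m_1, ..., m_{q−1}))), where m_0* = n − (m_1 + ... + m_{q−1}). -/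

import Mathlib

noncomputable section

/-- Evaluation of the elementary symmetric polynomial in `n` variables of degree `k`. -/
def esymmVal {R : Type*} [CommRing R] (n k : ℕ) (x : Fin n → R) : R :=
  ∑ s ∈ Finset.powersetCard k Finset.univ, ∏ i ∈ s, x i

/-- `Lam l a m k` is the quantity `Λ_{a_1,…,a_l}(k, m_1,…,m_l)`. -/
def Lam {R : Type*} [CommRing R] : (l : ℕ) → (Fin l → R) → (Fin l → ℕ) → ℤ → R
  | 0, _, _, k => if k = 0 then 1 else 0
  | l + 1, a, m, k =>
      ∑ j ∈ Finset.range (m (Fin.last l) + 1),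
        (Nat.choose (m (Fin.last l)) j : R) * a (Fin.last l) ^ j *
          Lam l (fun i => a i.castSucc) (fun i => m i.castSucc) (k - j)

open Finset Polynomial

lemma coeff_one_add_pow {R : Type*} [CommRing R] (a : R) (M j : ℕ) :
    ((1 + C a * X : R[X]) ^ M).coeff j = M.choose j * a ^ j := by
  have h : (1 + C a * X : R[X]) ^ M
      = ∑ i ∈ Finset.range (M + 1), C ((M.choose i : R) * a ^ i) * X ^ i := by
    rw [add_comm, add_pow]
    apply Finset.sum_congr rfl
    intro i _
    rw [map_mul, map_natCast, map_pow, mul_pow, ← C_pow]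
    ring
  rw [h, finset_sum_coeff]
  simp only [coeff_C_mul, coeff_X_pow]
  rw [Finset.sum_eq_single j]
  · by_cases hj : j ∈ Finset.range (M + 1)
    · simp
    · simp only [Finset.mem_range, not_lt] at hj
      simp [Nat.choose_eq_zero_of_lt (by omega : M < j)]
  · intro b _ hb; rw [if_neg fun h => hb h.symm, mul_zero]
  · intro hj; simp only [Finset.mem_range, not_lt] at hj
    simp [Nat.choose_eq_zero_of_lt (by omega : M < j)]


lemma coeff_prod_one_add {R : Type*} [CommRing R] (n : ℕ) (x : Fin n → R) (k : ℕ) :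
    (∏ t : Fin n, (1 + C (x t) * X : R[X])).coeff k = esymmVal n k x := by
  have h : ∀ t : Fin n, (1 + C (x t) * X : R[X]) = C (x t) * X + 1 := fun t => by ring
  simp only [h]
  rw [Finset.prod_add]
  simp only [Finset.prod_const_one, mul_one]
  have h2 : ∀ t : Finset (Fin n),
      (∏ i ∈ t, (C (x i) * X : R[X])) = C (∏ i ∈ t, x i) * X ^ t.card := by
    intro t
    rw [Finset.prod_mul_distrib, Finset.prod_const, ← map_prod]
  simp only [h2]
  rw [finset_sum_coeff]
  simp only [coeff_C_mul, coeff_X_pow]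
  rw [esymmVal, Finset.powersetCard_eq_filter, Finset.sum_filter]
  apply Finset.sum_congr rfl
  intro t _
  by_cases ht : t.card = k
  · simp [ht]
  · rw [if_neg fun h => ht h.symm, if_neg ht, mul_zero]

lemma Lam_neg {R : Type*} [CommRing R] :
    ∀ l (a : Fin l → R) (m : Fin l → ℕ) (k : ℤ), k < 0 → Lam l a m k = 0
  | 0, a, m, k, hk => by rw [Lam]; exact if_neg (by omega)
  | l + 1, a, m, k, hk => by
    rw [Lam]
    refine Finset.sum_eq_zero fun j _ => ?_
    rw [Lam_neg l _ _ _ (by omega), mul_zero]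


lemma Lam_eq_coeff {R : Type*} [CommRing R] :
    ∀ l (a : Fin l → R) (m : Fin l → ℕ) (k : ℕ),
      Lam l a m (k : ℤ) = (∏ i, ((1 + C (a i) * X : R[X]) ^ (m i))).coeff k
  | 0, a, m, k => by
    rw [Lam, Finset.univ_eq_empty, Finset.prod_empty, coeff_one]
    simp [Int.natCast_eq_zero]
  | l + 1, a, m, k => by
    rw [Lam, Fin.prod_univ_castSucc, mul_comm, coeff_mul,
      Finset.Nat.sum_antidiagonal_eq_sum_range_succ
        (f := fun u v => ((1 + C (a (Fin.last l)) * X : R[X]) ^ m (Fin.last l)).coeff u *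
          (∏ i : Fin l, ((1 + C (a i.castSucc) * X : R[X]) ^ (m i.castSucc))).coeff v)]
    set M := m (Fin.last l)
    set Q := ∏ i : Fin l, ((1 + C (a i.castSucc) * X : R[X]) ^ (m i.castSucc)) with hQ
    have key : ∀ j : ℕ, (M.choose j : R) * a (Fin.last l) ^ j *
        Lam l (fun i => a i.castSucc) (fun i => m i.castSucc) ((k : ℤ) - j)
        = ((1 + C (a (Fin.last l)) * X : R[X]) ^ M).coeff j *
          (if j ≤ k then Q.coeff (k - j) else 0) := by
      intro j
      rw [coeff_one_add_pow]
      by_cases hj : j ≤ k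
      · rw [if_pos hj]
        have : (k : ℤ) - j = ((k - j : ℕ) : ℤ) := by omega
        rw [this, Lam_eq_coeff l]
      · rw [if_neg hj, Lam_neg l _ _ _ (by omega), mul_zero]
    -- both sides equal sum over range (max M k + 1)
    have hL : ∑ j ∈ Finset.range (M + 1),
        (M.choose j : R) * a (Fin.last l) ^ j *
          Lam l (fun i => a i.castSucc) (fun i => m i.castSucc) ((k : ℤ) - j)
        = ∑ j ∈ Finset.range (max M k + 1),
        ((1 + C (a (Fin.last l)) * X : R[X]) ^ M).coeff j *
          (if j ≤ k then Q.coeff (k - j) else 0) := by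
      simp only [key]
      apply Finset.sum_subset
      · intro j hj; simp only [Finset.mem_range] at *; omega
      · intro j _ hj
        simp only [Finset.mem_range, not_lt] at hj
        rw [coeff_one_add_pow, Nat.choose_eq_zero_of_lt (by omega), Nat.cast_zero, zero_mul,
          zero_mul]
    have hR : ∑ j ∈ Finset.range (k + 1),
        ((1 + C (a (Fin.last l)) * X : R[X]) ^ M).coeff j * Q.coeff (k - j)
        = ∑ j ∈ Finset.range (max M k + 1),
        ((1 + C (a (Fin.last l)) * X : R[X]) ^ M).coeff j *
          (if j ≤ k then Q.coeff (k - j) else 0) := by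
      rw [Finset.sum_congr rfl (fun j hj => ?_)]
      · apply Finset.sum_subset
        · intro j hj; simp only [Finset.mem_range] at *; omega
        · intro j _ hj
          simp only [Finset.mem_range, not_lt] at hj
          rw [if_neg (by omega), mul_zero]
      · simp only [Finset.mem_range] at hj
        rw [if_pos (by omega)]
    rw [hL, ← hR]

lemma card_filter_subtype {D : Type} [Fintype D] [DecidableEq D] (T : Finset D)
    (P : D → Prop) [DecidablePred P] (h : ∀ t, P t → t ∉ T) :
    (univ.filter fun u : {t : D // t ∉ T} => P u.val).card = (univ.filter P).card := by
  apply Finset.card_nbij (fun u => u.val)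
  · intro u hu; simp only [mem_filter, mem_univ, true_and] at *; simpa using hu
  · intro u hu v hv huv; exact Subtype.ext huv
  · intro t ht
    simp only [Finset.coe_filter, Set.mem_image, Set.mem_setOf_eq, mem_univ, true_and] at *
    exact ⟨⟨t, h t ht⟩, ht, rfl⟩


lemma card_fiber_count_aux {ι : Type*} [Fintype ι] [DecidableEq ι] (s : Finset ι) :
    ∀ (D : Type) [Fintype D] [DecidableEq D] (M : ι → ℕ),
      (∑ i ∈ s, M i) = Fintype.card D →
      (univ.filter fun g : D → ι => (∀ t, g t ∈ s) ∧
          ∀ i ∈ s, (univ.filter fun t => g t = i).card = M i).card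
        = Nat.multinomial s M := by
  classical
  induction s using Finset.cons_induction with
  | empty =>
    intro D _ _ M hM
    simp only [Finset.sum_empty] at hM
    have : IsEmpty D := Fintype.card_eq_zero_iff.mp hM.symm
    rw [Nat.multinomial_empty, Finset.filter_true_of_mem
      (fun g _ => ⟨fun t => (this.false t).elim, fun i hi => absurd hi (notMem_empty i)⟩)]
    simp [Finset.card_univ]
  | cons a s ha ih =>
    intro D _ _ M hM
    rw [Nat.multinomial_cons]
    rw [Finset.card_eq_sum_card_fiberwise
      (f := fun g : D → ι => univ.filter fun t => g t = a)
      (t := Finset.powersetCard (M a) univ)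
      (fun g hg => by
        simp only [Finset.mem_coe, mem_filter, mem_univ, true_and] at hg
        rw [Finset.mem_coe, Finset.mem_powersetCard]
        exact ⟨Finset.subset_univ _, hg.2 a (mem_cons_self a s)⟩)]
    have hcardT : ∀ T ∈ Finset.powersetCard (M a) univ,
        ((univ.filter fun g : D → ι => (∀ t, g t ∈ cons a s ha) ∧
          ∀ i ∈ cons a s ha, (univ.filter fun t => g t = i).card = M i).filter
            (fun g => univ.filter (fun t => g t = a) = T)).card = Nat.multinomial s M := by
      intro T hT
      rw [Finset.mem_powersetCard] at hT
      have hsum : M a + ∑ i ∈ s, M i = Fintype.card D := by rw [← hM, Finset.sum_cons]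
      have hD' : (∑ i ∈ s, M i) = Fintype.card {t : D // t ∉ T} := by
        rw [Fintype.card_subtype_compl, Fintype.card_coe, hT.2]
        omega
      rw [← ih {t : D // t ∉ T} M hD']
      apply Finset.card_nbij' (fun g => fun u : {t : D // t ∉ T} => g u.val)
        (fun h => fun t => if ht : t ∈ T then a else h ⟨t, ht⟩)
      -- i maps into B_T
      · intro g hg
        simp only [Finset.mem_coe, mem_filter, mem_univ, true_and] at hg ⊢
        obtain ⟨⟨hmem, hcnt⟩, hfib⟩ := hg
        have hne : ∀ u : {t : D // t ∉ T}, g u.val ≠ a := fun u hu => by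
          have h2 : u.val ∈ univ.filter (fun t => g t = a) := mem_filter.mpr ⟨mem_univ _, hu⟩
          rw [hfib] at h2
          exact u.prop h2
        refine ⟨fun u => ?_, fun i hi => ?_⟩
        · rcases Finset.mem_cons.mp (hmem u.val) with h | h
          · exact absurd h (hne u)
          · exact h
        · rw [card_filter_subtype T (fun t => g t = i)
            (fun t htg hc => ha (by
              have h3 : g t = a := (mem_filter.mp
                (show t ∈ univ.filter (fun t => g t = a) from by rw [hfib]; exact hc)).2
              have hai : a = i := by rw [← h3]; exact htg
              exact hai ▸ hi))]
          exact hcnt i (Finset.mem_cons_of_mem hi)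
      -- j maps into A_T
      · intro h hh
        simp only [Finset.mem_coe, mem_filter, mem_univ, true_and] at hh ⊢
        obtain ⟨hmem, hcnt⟩ := hh
        have hfib : (univ.filter fun t => (if ht : t ∈ T then a else h ⟨t, ht⟩) = a) = T := by
          ext t
          simp only [mem_filter, mem_univ, true_and]
          constructor
          · intro hc
            by_contra hnt
            rw [dif_neg hnt] at hc
            exact ha (hc ▸ hmem ⟨t, hnt⟩)
          · intro ht; rw [dif_pos ht]
        refine ⟨⟨fun t => ?_, fun i hi => ?_⟩, hfib⟩
        · by_cases ht : t ∈ T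
          · rw [dif_pos ht]; exact mem_cons_self a s
          · rw [dif_neg ht]; exact Finset.mem_cons_of_mem (hmem ⟨t, ht⟩)
        · rcases Finset.mem_cons.mp hi with rfl | hi'
          · rw [hfib]; exact hT.2
          · have hia : i ≠ a := fun h' => ha (h' ▸ hi')
            rw [← card_filter_subtype T
              (fun t => (if ht : t ∈ T then a else h ⟨t, ht⟩) = i)
              (fun t htg hts => by
                have htg' : (if ht : t ∈ T then a else h ⟨t, ht⟩) = i := htg
                rw [dif_pos hts] at htg'; exact hia htg'.symm)]
            rw [← hcnt i hi']
            congr 1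
            apply Finset.filter_congr
            intro u _
            rw [dif_neg u.prop]
      -- left inverse
      · intro g hg
        simp only [Finset.mem_coe, mem_filter, mem_univ, true_and] at hg
        funext t
        beta_reduce
        by_cases ht : t ∈ T
        · rw [dif_pos ht]
          have h2 : t ∈ univ.filter (fun t => g t = a) := by rw [hg.2]; exact ht
          exact (mem_filter.mp h2).2.symm
        · rw [dif_neg ht]
      -- right inverse
      · intro h _
        funext u
        simp [u.prop]
    have hsum : M a + ∑ i ∈ s, M i = Fintype.card D := by rw [← hM, Finset.sum_cons]
    rw [Finset.sum_congr rfl hcardT, Finset.sum_const, Finset.card_powersetCard,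
      Finset.card_univ, smul_eq_mul, ← hsum]


lemma card_fiber_count {ι : Type*} [Fintype ι] [DecidableEq ι]
    (D : Type) [Fintype D] [DecidableEq D] (M : ι → ℕ)
    (hM : (∑ i, M i) = Fintype.card D) :
    (univ.filter fun g : D → ι => ∀ i, (univ.filter fun t => g t = i).card = M i).card
      = Nat.multinomial univ M := by
  rw [← card_fiber_count_aux univ D M hM]
  congr 1
  apply Finset.filter_congr
  intro g _
  simp

/-- The exponential sum of `∑_j β_j e_{n,k_j}` over the Galois field `F_q`, `q = p^r`,
expressed as a multinomial sum; `m_0* = n - (m_1 + ⋯ + m_{q-1})`. -/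
theorem stmt3 (p : ℕ) [Fact p.Prime] (r : ℕ) (hr : 0 < r) (n : ℕ) (hn : 0 < n)
    (s : ℕ) (hs : 0 < s) (k : Fin s → ℕ) (hk1 : ∀ j, 1 ≤ k j) (hmono : StrictMono k)
    (K : Type*) [Field K] [Fintype K] [Algebra (ZMod p) K]
    (hcard : Fintype.card K = p ^ r)
    (β : Fin s → K) (hβ : ∀ j, β j ≠ 0)
    (α : Fin (p ^ r - 1) → K)
    (hinj : Function.Injective α) (h0 : ∀ i, α i ≠ 0) :
    (∑ x : Fin n → K,
        Complex.exp (2 * (Real.pi : ℂ) * Complex.I / p *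
          ((Algebra.trace (ZMod p) K (∑ j, β j * esymmVal n (k j) x)).val : ℂ)))
      = ∑ m ∈ (Fintype.piFinset fun _ : Fin (p ^ r - 1) => Finset.range (n + 1)).filter
            (fun m => ∑ i, m i ≤ n),
          (Nat.multinomial Finset.univ
              (fun o : Option (Fin (p ^ r - 1)) => o.elim (n - ∑ i, m i) m) : ℂ) *
            Complex.exp (2 * (Real.pi : ℂ) * Complex.I / p *
              ((Algebra.trace (ZMod p) K
                  (∑ j, β j * Lam (p ^ r - 1) α m (k j : ℤ))).val : ℂ)) := by
  classical
  have hppos : 0 < p ^ r := pow_pos (Fact.out (p := p.Prime)).pos r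
  obtain ⟨e, he0, hes⟩ : ∃ e : Option (Fin (p ^ r - 1)) ≃ K,
      e none = 0 ∧ ∀ i, e (some i) = α i := by
    have hvbij : Function.Bijective (fun o : Option (Fin (p ^ r - 1)) => o.elim (0 : K) α) := by
      rw [Fintype.bijective_iff_injective_and_card]
      constructor
      · intro o1 o2 h
        cases o1 <;> cases o2 <;> simp only [Option.elim] at h ⊢
        · exact absurd h.symm (h0 _)
        · exact absurd h (h0 _)
        · rw [hinj h]
      · simp only [Fintype.card_option, Fintype.card_fin, hcard]
        omega
    exact ⟨Equiv.ofBijective _ hvbij, rfl, fun i => rfl⟩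
  have htot : ∀ x : Fin n → K,
      (univ.filter fun t => x t = (0 : K)).card
        + (∑ i, (univ.filter fun t => x t = α i).card) = n := by
    intro x
    have h1 : ∑ y : K, (univ.filter fun t => x t = y).card = n := by
      rw [← Finset.card_eq_sum_card_fiberwise (fun t (_ : t ∈ univ) => mem_univ (x t))]
      simp
    have h2 : ∑ y : K, (univ.filter fun t => x t = y).card
        = (univ.filter fun t => x t = (0 : K)).card
          + (∑ i, (univ.filter fun t => x t = α i).card) := by
      rw [← Equiv.sum_comp e (fun y => (univ.filter fun t => x t = y).card),
        Fintype.sum_option, he0]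
      congr 1
      exact Finset.sum_congr rfl fun i _ => by rw [hes]
    omega
  have hmapsto : ∀ x : Fin n → K,
      (fun i => (univ.filter fun t => x t = α i).card) ∈
      (Fintype.piFinset fun _ : Fin (p ^ r - 1) => Finset.range (n + 1)).filter
        (fun m => ∑ i, m i ≤ n) := by
    intro x
    rw [mem_filter, Fintype.mem_piFinset]
    constructor
    · intro i
      rw [Finset.mem_range, Nat.lt_succ_iff]
      calc (univ.filter fun t => x t = α i).card
          ≤ (univ : Finset (Fin n)).card := Finset.card_filter_le _ _
        _ = n := by simp
    · show (∑ i, (univ.filter fun t => x t = α i).card) ≤ n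
      have := htot x; omega
  rw [← Finset.sum_fiberwise_of_maps_to (fun x _ => hmapsto x)]
  apply Finset.sum_congr rfl
  intro m hm
  rw [mem_filter, Fintype.mem_piFinset] at hm
  obtain ⟨hmem, hle⟩ := hm
  -- the value is constant on the fiber
  have hval : ∀ x ∈ univ.filter
        (fun x : Fin n → K => (fun i => (univ.filter fun t => x t = α i).card) = m),
      (∑ j, β j * esymmVal n (k j) x) = ∑ j, β j * Lam (p ^ r - 1) α m (k j : ℤ) := by
    intro x hx
    have hx' : (fun i => (univ.filter fun t => x t = α i).card) = m := (mem_filter.mp hx).2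
    refine Finset.sum_congr rfl fun j _ => ?_
    congr 1
    rw [← coeff_prod_one_add n x (k j), Lam_eq_coeff]
    congr 1
    have hfib : ∏ t : Fin n, (1 + C (x t) * X : K[X])
        = ∏ y : K, (1 + C y * X : K[X]) ^ (univ.filter fun t => x t = y).card := by
      rw [← Finset.prod_fiberwise_of_maps_to (g := x)
        (fun t (_ : t ∈ univ) => mem_univ (x t)) (fun t => (1 + C (x t) * X : K[X]))]
      refine Finset.prod_congr rfl fun y _ => ?_
      rw [Finset.prod_congr rfl (fun t ht => by rw [(mem_filter.mp ht).2]),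
        Finset.prod_const]
    rw [hfib, ← Equiv.prod_comp e
      (fun y => (1 + C y * X : K[X]) ^ (univ.filter fun t => x t = y).card),
      Fintype.prod_option, he0]
    simp only [map_zero, zero_mul, add_zero, one_pow, one_mul]
    refine Finset.prod_congr rfl fun i _ => ?_
    rw [hes]
    congr 1
    rw [← hx']
  have hconst : ∀ x ∈ univ.filter
        (fun x : Fin n → K => (fun i => (univ.filter fun t => x t = α i).card) = m),
      Complex.exp (2 * (Real.pi : ℂ) * Complex.I / p *
          ((Algebra.trace (ZMod p) K (∑ j, β j * esymmVal n (k j) x)).val : ℂ))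
        = Complex.exp (2 * (Real.pi : ℂ) * Complex.I / p *
          ((Algebra.trace (ZMod p) K
            (∑ j, β j * Lam (p ^ r - 1) α m (k j : ℤ))).val : ℂ)) := by
    intro x hx
    rw [hval x hx]
  rw [Finset.sum_congr rfl hconst, Finset.sum_const, nsmul_eq_mul]
  congr 1
  -- cardinality of the fiber
  have hMK : (∑ y : K, (fun o : Option (Fin (p ^ r - 1)) => o.elim (n - ∑ i, m i) m)
      (e.symm y)) = Fintype.card (Fin n) := by
    rw [Equiv.sum_comp e.symm (fun o : Option (Fin (p ^ r - 1)) => o.elim (n - ∑ i, m i) m),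
      Fintype.sum_option]
    simp only [Option.elim]
    rw [Fintype.card_fin]
    omega
  have hcf := card_fiber_count (Fin n)
    (fun y => (fun o : Option (Fin (p ^ r - 1)) => o.elim (n - ∑ i, m i) m) (e.symm y)) hMK
  have hfe : (univ.filter fun g : Fin n → K =>
        ∀ y, (univ.filter fun t => g t = y).card
          = (fun o : Option (Fin (p ^ r - 1)) => o.elim (n - ∑ i, m i) m) (e.symm y))
      = univ.filter
        (fun x : Fin n → K => (fun i => (univ.filter fun t => x t = α i).card) = m) := by
    apply Finset.filter_congr
    intro x _
    constructor
    · intro h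
      funext i
      have h2 := h (e (some i))
      rw [Equiv.symm_apply_apply, hes] at h2
      exact h2
    · intro h y
      obtain ⟨o, rfl⟩ := e.surjective y
      rw [Equiv.symm_apply_apply]
      cases o with
      | some i =>
        rw [hes]
        show (univ.filter fun t => x t = α i).card = m i
        exact congrFun h i
      | none =>
        rw [he0]
        have h1 := htot x
        have h2 : ∑ i, (univ.filter fun t => x t = α i).card = ∑ i, m i :=
          Finset.sum_congr rfl fun i _ => congrFun h i
        show (univ.filter fun t => x t = (0 : K)).card = n - ∑ i, m i
        rw [h2] at h1
        exact Nat.eq_sub_of_add_eq h1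
  have hmeq : Nat.multinomial (univ : Finset K)
        (fun y => (fun o : Option (Fin (p ^ r - 1)) => o.elim (n - ∑ i, m i) m) (e.symm y))
      = Nat.multinomial univ
        (fun o : Option (Fin (p ^ r - 1)) => o.elim (n - ∑ i, m i) m) := by
    unfold Nat.multinomial
    rw [Equiv.sum_comp e.symm (fun o : Option (Fin (p ^ r - 1)) => o.elim (n - ∑ i, m i) m),
      Equiv.prod_comp e.symm
        (fun o : Option (Fin (p ^ r - 1)) => ((fun o : Option (Fin (p ^ r - 1)) =>
          o.elim (n - ∑ i, m i) m) o).factorial)]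
  rw [hfe, hmeq] at hcf
  rw [hcf]
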